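/- Descent step in the proof of Theorem 1: Let M be a matroid of rank n ≥ 3 on n² elements partitioned into n disjoint bases B_1,...,B_n. Assume C(3) holds. Define a double partition of M to be a pair (β,τ) where β = (β_1,...,β_n) is a partition of the ground set into n pairwise disjoint bases and τ = (τ_1,...,τ_n) is a partition into n pairwise disjoint transversals (sets meeting each B_i in exactly one element), and define μ(β,τ) = Σ_{i≠j} |β_i ∩ τ_j|. Then for every double partition (β,τ) with μ(β,τ) > 0, there exists a double partition (β',τ') with μ(β',τ') < μ(β,τ). -/

import Mathlib

open Set Function Matroid

/-- A partition of the ground set of `M` into `n` pairwise disjoint bases. -/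
def IsBasePartition {α : Type} {n : ℕ} (M : Matroid α) (β : Fin n → Set α) : Prop :=
  (∀ i, M.IsBase (β i)) ∧ Pairwise (Function.onFun Disjoint β) ∧ (⋃ i, β i) = M.E

/-- A partition of `E` into `n` pairwise disjoint transversals of the bases `B`
(each meeting each `B i` in exactly one element). -/
def IsTransversalPartition {α : Type} {n : ℕ} (B τ : Fin n → Set α) (E : Set α) : Prop :=
  (∀ j i, (τ j ∩ B i).ncard = 1) ∧ Pairwise (Function.onFun Disjoint τ) ∧ (⋃ j, τ j) = E

/-- `μ(β,τ) = Σ_{i ≠ j} |β_i ∩ τ_j|`. -/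
noncomputable def mu {α : Type} {n : ℕ} (β τ : Fin n → Set α) : ℕ :=
  ∑ i, ∑ j, if i = j then 0 else (β i ∩ τ j).ncard

open Set Function Matroid

/-- Rota's basis conjecture for rank `n`. -/
def RotaConj (n : ℕ) : Prop :=
  ∀ (α : Type) (M : Matroid α) (B : Fin n → Set α),
    (∀ i, M.IsBase (B i)) → (∀ i, (B i).ncard = n) →
    Pairwise (Function.onFun Disjoint B) → (⋃ i, B i) = M.E →
    ∃ g : Fin n → Fin n → α,
      Function.Injective (fun p : Fin n × Fin n => g p.1 p.2) ∧
      (∀ x ∈ M.E, ∃ i j, g i j = x) ∧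
      (∀ i, {x | ∃ j, g i j = x} = B i) ∧
      (∀ j, M.IsBase {x | ∃ i, g i j = x})

/-- The statement `C(k)` from the paper. -/
def CStatement (k : ℕ) : Prop :=
  ∀ (α : Type) (n : ℕ) (M : Matroid α) (B : Fin k → Set α) (I : Fin n → Set α),
    (∀ j, M.IsBase (B j)) → (∀ j, (B j).ncard = n) →
    Pairwise (Function.onFun Disjoint B) → (⋃ j, B j) = M.E →
    (∀ i, M.Indep (I i)) → Pairwise (Function.onFun Disjoint I) →
    (∀ i, (I i).ncard ≤ k) →
    ∃ g : Fin n → Fin k → α,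
      Function.Injective (fun p : Fin n × Fin k => g p.1 p.2) ∧
      (∀ x ∈ M.E, ∃ i j, g i j = x) ∧
      (∀ i, I i ⊆ {x | ∃ j, g i j = x}) ∧
      (∀ j, M.IsBase {x | ∃ i, g i j = x})

lemma aux_ncard_biUnion {α ι : Type*} [DecidableEq ι] (s : Finset ι) (t : ι → Set α)
    (hfin : ∀ i ∈ s, (t i).Finite)
    (hdisj : ∀ i ∈ s, ∀ j ∈ s, i ≠ j → Disjoint (t i) (t j)) :
    (⋃ i ∈ s, t i).ncard = ∑ i ∈ s, (t i).ncard := by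
  classical
  induction s using Finset.induction_on with
  | empty => simp
  | @insert a s hnotmem ih =>
    rw [Finset.set_biUnion_insert, Finset.sum_insert hnotmem,
      Set.ncard_union_eq ?_ (hfin a (by simp)) ?_,
      ih (fun i hi => hfin i (by simp [hi])) (fun i hi j hj => hdisj i (by simp [hi]) j (by simp [hj]))]
    · exact Set.disjoint_iUnion₂_right.mpr fun i hi =>
        hdisj a (by simp) i (by simp [Finset.mem_coe.mp hi]) (by rintro rfl; exact hnotmem hi)
    · exact Set.Finite.biUnion (Finset.finite_toSet s) (fun i hi => hfin i (by simp [Finset.mem_coe.mp hi]))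

lemma aux_ncard_iUnion {α : Type*} {m : ℕ} (t : Fin m → Set α) (hfin : ∀ i, (t i).Finite)
    (hdisj : Pairwise (Function.onFun Disjoint t)) : (⋃ i, t i).ncard = ∑ i, (t i).ncard := by
  rw [show (⋃ i, t i) = ⋃ i ∈ Finset.univ, t i by simp]
  exact aux_ncard_biUnion _ _ (fun i _ => hfin i) (fun i _ j _ hij => hdisj hij)

lemma aux_mu_add {α : Type} {n : ℕ} (E : Set α) (hE : E.Finite) (γ τ : Fin n → Set α)
    (hγE : ∀ a, γ a ⊆ E) (hγcard : ∀ a, (γ a).ncard = n)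
    (hτdisj : Pairwise (Function.onFun Disjoint τ)) (hτE : (⋃ j, τ j) = E) :
    mu γ τ + ∑ a, (γ a ∩ τ a).ncard = n * n := by
  have key : ∀ i, (∑ j, if i = j then 0 else (γ i ∩ τ j).ncard) + (γ i ∩ τ i).ncard = n := by
    intro i
    have h1 : ∀ j, (γ i ∩ τ j).ncard =
        (if i = j then 0 else (γ i ∩ τ j).ncard) + (if i = j then (γ i ∩ τ j).ncard else 0) := by
      intro j; by_cases h : i = j <;> simp [h]
    have h2 : (∑ j, (γ i ∩ τ j).ncard) = n := by
      have hcover : (⋃ j, γ i ∩ τ j) = γ i := by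
        rw [← Set.inter_iUnion, hτE]
        exact Set.inter_eq_self_of_subset_left (hγE i)
      have := aux_ncard_iUnion (fun j => γ i ∩ τ j)
        (fun j => hE.subset ((Set.inter_subset_left).trans (hγE i)))
        (fun j k hjk => ((hτdisj hjk).mono_left Set.inter_subset_right).mono_right
          Set.inter_subset_right)
      rw [hcover, hγcard i] at this
      exact this.symm
    calc (∑ j, if i = j then 0 else (γ i ∩ τ j).ncard) + (γ i ∩ τ i).ncard
        = (∑ j, if i = j then 0 else (γ i ∩ τ j).ncard)
          + (∑ j, if i = j then (γ i ∩ τ j).ncard else 0) := by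
          rw [Finset.sum_ite_eq Finset.univ i (fun j => (γ i ∩ τ j).ncard)]
          simp
      _ = ∑ j, (γ i ∩ τ j).ncard := by
          rw [← Finset.sum_add_distrib]
          exact Finset.sum_congr rfl fun j _ => (h1 j).symm
      _ = n := h2
  calc mu γ τ + ∑ a, (γ a ∩ τ a).ncard
      = ∑ i, ((∑ j, if i = j then 0 else (γ i ∩ τ j).ncard) + (γ i ∩ τ i).ncard) := by
        rw [mu, ← Finset.sum_add_distrib]
    _ = ∑ _i : Fin n, n := Finset.sum_congr rfl fun i _ => key i
    _ = n * n := by simp [Finset.sum_const, mul_comm]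

lemma aux_ncard_setOf {ι : Type} [Fintype ι] (P : ι → Prop) [DecidablePred P] :
    {x | P x}.ncard = ∑ x, if P x then 1 else 0 := by
  classical
  rw [Set.ncard_eq_toFinset_card' {x | P x}]
  rw [← Finset.card_filter]
  congr 1
  ext x
  simp

lemma aux_tstar {α : Type} {n : ℕ} (E : Set α) (hE : E.Finite)
    (B : Fin n → Set α) (hBcard : ∀ c, (B c).ncard = n)
    (hBdisj : Pairwise (Function.onFun Disjoint B)) (hBU : (⋃ c, B c) = E)
    (γ : Fin n → Set α) (hγdisj : Pairwise (Function.onFun Disjoint γ)) :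
    ∃ τ : Fin n → Set α, IsTransversalPartition B τ E ∧
      ∀ a, {c | (γ a ∩ B c).Nonempty}.ncard ≤ (γ a ∩ τ a).ncard := by
  classical
  have hBE : ∀ c, B c ⊆ E := fun c => hBU ▸ Set.subset_iUnion B c
  have hBfin : ∀ c, (B c).Finite := fun c => hE.subset (hBE c)
  have hBfc : ∀ c, ((hBfin c).toFinset).card = n := by
    intro c; rw [← Set.ncard_eq_toFinset_card (B c) (hBfin c)]; exact hBcard c
  have key : ∀ c : Fin n, ∃ f : Fin n → α, Function.Injective f ∧ (∀ a, f a ∈ B c) ∧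
      (∀ x ∈ B c, ∃ a, f a = x) ∧ (∀ a, (γ a ∩ B c).Nonempty → f a ∈ γ a) := by
    intro c
    set t : Fin n → Finset α := fun a =>
      if h : (γ a ∩ B c).Nonempty then (hE.subset ((Set.inter_subset_right).trans (hBE c)) :
        (γ a ∩ B c).Finite).toFinset else (hBfin c).toFinset with ht
    have htsub : ∀ a, t a ⊆ (hBfin c).toFinset := by
      intro a
      by_cases h : (γ a ∩ B c).Nonempty
      · simp only [ht]
        rw [dif_pos h]
        intro x hx
        simp only [Set.Finite.mem_toFinset] at hx ⊢
        exact hx.2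
      · simp only [ht]
        rw [dif_neg h]
    have hall : ∀ s : Finset (Fin n), s.card ≤ (s.biUnion t).card := by
      intro s
      by_cases hs : ∀ a ∈ s, (γ a ∩ B c).Nonempty
      · have hdisjt : ∀ x ∈ s, ∀ y ∈ s, x ≠ y → Disjoint (t x) (t y) := by
          intro x hx y hy hxy
          simp only [ht]
          rw [dif_pos (hs x hx), dif_pos (hs y hy), Set.Finite.disjoint_toFinset]
          exact ((hγdisj hxy).mono_left Set.inter_subset_left).mono_right Set.inter_subset_left
        rw [Finset.card_biUnion hdisjt]
        calc s.card = ∑ _a ∈ s, 1 := by simp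
          _ ≤ ∑ a ∈ s, (t a).card := by
            refine Finset.sum_le_sum fun a ha => ?_
            rw [Nat.one_le_iff_ne_zero, ← Nat.pos_iff_ne_zero, Finset.card_pos]
            simp only [ht]
            rw [dif_pos (hs a ha), Set.Finite.toFinset_nonempty]
            exact hs a ha
      · push_neg at hs
        obtain ⟨a, ha, hna⟩ := hs
        have hta : t a = (hBfin c).toFinset := by
          simp only [ht]
          rw [dif_neg (by rw [Set.not_nonempty_iff_eq_empty]; exact hna)]
        have hsubB : (hBfin c).toFinset ⊆ s.biUnion t := by
          rw [← hta]; exact Finset.subset_biUnion_of_mem t ha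
        calc s.card ≤ (Finset.univ : Finset (Fin n)).card := Finset.card_le_univ s
          _ = n := by simp
          _ = ((hBfin c).toFinset).card := (hBfc c).symm
          _ ≤ (s.biUnion t).card := Finset.card_le_card hsubB
    obtain ⟨f, hfinj, hft⟩ := (Finset.all_card_le_biUnion_card_iff_exists_injective t).mp hall
    have hfB : ∀ a, f a ∈ B c := by
      intro a
      have := htsub a (hft a)
      simpa using this
    refine ⟨f, hfinj, hfB, ?_, ?_⟩
    · intro x hx
      have himg : Finset.univ.image f = (hBfin c).toFinset := by
        apply Finset.eq_of_subset_of_card_le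
        · intro y hy
          simp only [Finset.mem_image] at hy
          obtain ⟨a, _, rfl⟩ := hy
          simpa using hfB a
        · rw [hBfc c, Finset.card_image_of_injective _ hfinj]
          simp
      have : x ∈ Finset.univ.image f := by rw [himg]; simpa using hx
      simp only [Finset.mem_image] at this
      obtain ⟨a, _, rfl⟩ := this
      exact ⟨a, rfl⟩
    · intro a hne
      have := hft a
      simp only [ht] at this
      rw [dif_pos hne, Set.Finite.mem_toFinset] at this
      exact this.1
  choose F hFinj hFB hFsurj hFγ using key
  refine ⟨fun a => Set.range fun c => F c a, ⟨?_, ?_, ?_⟩, ?_⟩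
  · intro a i
    have h1 : (Set.range fun c => F c a) ∩ B i = {F i a} := by
      ext x
      simp only [Set.mem_inter_iff, Set.mem_range, Set.mem_singleton_iff]
      constructor
      · rintro ⟨⟨c, rfl⟩, hxB⟩
        have hc : c = i := by
          by_contra hne
          exact (hBdisj hne).ne_of_mem (hFB c a) hxB rfl
        rw [hc]
      · rintro rfl
        exact ⟨⟨i, rfl⟩, hFB i a⟩
    rw [h1, Set.ncard_singleton]
  · intro a b hab
    rw [Function.onFun, Set.disjoint_left]
    rintro x ⟨c, rfl⟩ ⟨c', hc'⟩
    simp only at hc'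
    have hcc' : c' = c := by
      by_contra hne
      exact (hBdisj hne).ne_of_mem (hFB c' b) (hc' ▸ hFB c a) hc'
    rw [hcc'] at hc'
    exact hab (hFinj c hc'.symm)
  · apply Set.Subset.antisymm
    · rintro x ⟨s, ⟨a, rfl⟩, ⟨c, rfl⟩⟩
      exact hBE c (hFB c a)
    · intro x hx
      rw [← hBU] at hx
      obtain ⟨s, ⟨c, rfl⟩, hxc⟩ := hx
      obtain ⟨a, rfl⟩ := hFsurj c x hxc
      exact Set.mem_iUnion.mpr ⟨a, ⟨c, rfl⟩⟩
  · intro a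
    have hinj : Set.InjOn (fun c => F c a) {c | (γ a ∩ B c).Nonempty} := by
      intro c hc c' hc' heq
      simp only at heq
      by_contra hne
      exact (hBdisj hne).ne_of_mem (hFB c a) (heq ▸ hFB c' a) heq
    have himg : (fun c => F c a) '' {c | (γ a ∩ B c).Nonempty} ⊆
        γ a ∩ (Set.range fun c => F c a) := by
      rintro x ⟨c, hc, rfl⟩
      exact ⟨hFγ c a hc, ⟨c, rfl⟩⟩
    calc {c | (γ a ∩ B c).Nonempty}.ncard
        = ((fun c => F c a) '' {c | (γ a ∩ B c).Nonempty}).ncard :=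
          (Set.ncard_image_of_injOn hinj).symm
      _ ≤ (γ a ∩ (Set.range fun c => F c a)).ncard :=
          Set.ncard_le_ncard himg ((Set.finite_range _).subset Set.inter_subset_right)

noncomputable def PhiFun {α : Type} {n : ℕ} (B γ : Fin n → Set α) : ℕ :=
  ∑ c, {a | (γ a ∩ B c).Nonempty}.ncard

lemma aux_phi_increase {α : Type} {n : ℕ} (hn : 3 ≤ n) (M : Matroid α)
    (hEfin : M.E.Finite)
    (B : Fin n → Set α) (hB : IsBasePartition M B) (hBcard : ∀ i, (B i).ncard = n)
    (hC3 : CStatement 3)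
    (β : Fin n → Set α) (hβ : IsBasePartition M β)
    (hlt : PhiFun B β < n * n) :
    ∃ β', IsBasePartition M β' ∧ PhiFun B β < PhiFun B β' := by
  classical
  obtain ⟨hβbase, hβdisj, hβU⟩ := hβ
  obtain ⟨hBbase, hBdisj, hBU⟩ := hB
  have hβE : ∀ a, β a ⊆ M.E := fun a => (hβbase a).subset_ground
  have hbase_ncard : ∀ X, M.IsBase X → X.ncard = n := fun X hX =>
    (hX.ncard_eq_ncard_of_isBase (hBbase ⟨0, by omega⟩)).trans (hBcard _)
  have hβcard : ∀ a, (β a).ncard = n := fun a => hbase_ncard _ (hβbase a)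
  -- find c₀, a₀ with empty intersection
  obtain ⟨c₀, a₀, ha₀⟩ : ∃ c₀ a₀, β a₀ ∩ B c₀ = ∅ := by
    by_contra h
    push_neg at h
    have hall : ∀ c : Fin n, {a | (β a ∩ B c).Nonempty}.ncard = n := by
      intro c
      have huniv : {a | (β a ∩ B c).Nonempty} = Set.univ := by
        ext a; simpa using h c a
      rw [huniv, Set.ncard_univ]; simp
    rw [PhiFun] at hlt
    simp only [hall, Finset.sum_const, Finset.card_univ, Fintype.card_fin, smul_eq_mul] at hlt
    omega
  -- pigeonhole: b₀ with ≥ 2 elements in B c₀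
  have hsum_c₀ : ∑ a, (β a ∩ B c₀).ncard = n := by
    have hcover : (⋃ a, β a ∩ B c₀) = B c₀ := by
      rw [← Set.iUnion_inter, hβU]
      exact Set.inter_eq_self_of_subset_right (hBU ▸ Set.subset_iUnion B c₀)
    have h := aux_ncard_iUnion (fun a => β a ∩ B c₀)
      (fun a => hEfin.subset ((Set.inter_subset_left).trans (hβE a)))
      (fun a b hab => ((hβdisj hab).mono_left Set.inter_subset_left).mono_right
        Set.inter_subset_left)
    rw [hcover] at h
    rw [← h]; exact hBcard c₀
  obtain ⟨b₀, hb₀2⟩ : ∃ b₀, 2 ≤ (β b₀ ∩ B c₀).ncard := by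
    by_contra h
    push_neg at h
    have hle : ∀ a, (β a ∩ B c₀).ncard ≤ 1 := fun a => by have := h a; omega
    have hsplit : ∑ a ∈ Finset.univ.erase a₀, (β a ∩ B c₀).ncard + (β a₀ ∩ B c₀).ncard
        = ∑ a, (β a ∩ B c₀).ncard :=
      Finset.sum_erase_add Finset.univ _ (Finset.mem_univ a₀)
    have hz : (β a₀ ∩ B c₀).ncard = 0 := by rw [ha₀]; simp
    have hbound : ∑ a ∈ Finset.univ.erase a₀, (β a ∩ B c₀).ncard
        ≤ ∑ _a ∈ Finset.univ.erase a₀, 1 :=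
      Finset.sum_le_sum fun a _ => hle a
    simp only [Finset.sum_const, smul_eq_mul, mul_one] at hbound
    rw [Finset.card_erase_of_mem (Finset.mem_univ a₀)] at hbound
    simp only [Finset.card_univ, Fintype.card_fin] at hbound
    omega
  have hb₀ne : b₀ ≠ a₀ := by
    rintro rfl; rw [ha₀] at hb₀2; simp at hb₀2
  obtain ⟨a₂, ha₂0, ha₂b⟩ : ∃ a₂ : Fin n, a₂ ≠ a₀ ∧ a₂ ≠ b₀ := by
    by_contra h
    push_neg at h
    have hsub : (Finset.univ : Finset (Fin n)) ⊆ {a₀, b₀} := by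
      intro a _
      by_cases ha : a = a₀
      · simp [ha]
      · simp [h a ha]
    have := Finset.card_le_card hsub
    have h2 : ({a₀, b₀} : Finset (Fin n)).card ≤ 2 :=
      (Finset.card_insert_le _ _).trans (by simp)
    simp only [Finset.card_univ, Fintype.card_fin] at this
    omega
  set U : Set α := β a₀ ∪ β b₀ ∪ β a₂ with hU
  have hUE : U ⊆ M.E :=
    Set.union_subset (Set.union_subset (hβE a₀) (hβE b₀)) (hβE a₂)
  have hUfin : U.Finite := hEfin.subset hUE
  set Bc3 : Fin 3 → Set α := ![β a₀, β b₀, β a₂] with hBc3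
  have hBc30 : Bc3 0 = β a₀ := rfl
  have hBc31 : Bc3 1 = β b₀ := rfl
  have hBc32 : Bc3 2 = β a₂ := rfl
  have hBc3cases : ∀ j : Fin 3, Bc3 j = β a₀ ∨ Bc3 j = β b₀ ∨ Bc3 j = β a₂ := by
    intro j; fin_cases j
    · exact Or.inl rfl
    · exact Or.inr (Or.inl rfl)
    · exact Or.inr (Or.inr rfl)
  have hβa₀U : β a₀ ⊆ U := Set.subset_union_left.trans Set.subset_union_left
  have hβb₀U : β b₀ ⊆ U := Set.subset_union_right.trans Set.subset_union_left
  have hβa₂U : β a₂ ⊆ U := Set.subset_union_right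
  have hBc3subU : ∀ j, Bc3 j ⊆ U := by
    intro j
    rcases hBc3cases j with h | h | h <;> rw [h]
    · exact hβa₀U
    · exact hβb₀U
    · exact hβa₂U
  have hNbase : ∀ j : Fin 3, (M ↾ U).IsBase (Bc3 j) := by
    intro j
    rw [Matroid.isBase_restrict_iff hUE]
    refine Matroid.IsBase.isBasis_of_subset hUE ?_ (hBc3subU j)
    rcases hBc3cases j with h | h | h <;> rw [h]
    · exact hβbase a₀
    · exact hβbase b₀
    · exact hβbase a₂
  have hNcard : ∀ j, (Bc3 j).ncard = n := by
    intro j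
    rcases hBc3cases j with h | h | h <;> rw [h] <;> exact hβcard _
  have hNdisj : Pairwise (Function.onFun Disjoint Bc3) := by
    have d01 : Disjoint (β a₀) (β b₀) := hβdisj hb₀ne.symm
    have d02 : Disjoint (β a₀) (β a₂) := hβdisj ha₂0.symm
    have d12 : Disjoint (β b₀) (β a₂) := hβdisj ha₂b.symm
    intro i j hij
    fin_cases i <;> fin_cases j <;> simp only [Function.onFun, hBc30, hBc31, hBc32] <;>
      first
        | exact absurd rfl hij
        | exact d01
        | exact d02
        | exact d12
        | exact d01.symm
        | exact d02.symm
        | exact d12.symm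
  have hNU : (⋃ j, Bc3 j) = (M ↾ U).E := by
    rw [Matroid.restrict_ground_eq]
    apply Set.Subset.antisymm (Set.iUnion_subset hBc3subU)
    intro x hx
    rcases hx with (hx | hx) | hx
    · exact Set.mem_iUnion.mpr ⟨0, hx⟩
    · exact Set.mem_iUnion.mpr ⟨1, hx⟩
    · exact Set.mem_iUnion.mpr ⟨2, hx⟩
  set k : Fin n → ℕ := fun c => (U ∩ B c).ncard with hk
  have hJex : ∀ c, ∃ J, J ⊆ U ∩ B c ∧ J.ncard = min (k c) 3 :=
    fun c => Set.exists_subset_card_eq (min_le_left (k c) 3)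
  choose J hJsub hJcard using hJex
  have hJindep : ∀ c, (M ↾ U).Indep (J c) := fun c =>
    Matroid.restrict_indep_iff.mpr
      ⟨(hBbase c).indep.subset ((hJsub c).trans Set.inter_subset_right),
       (hJsub c).trans Set.inter_subset_left⟩
  have hJdisj : Pairwise (Function.onFun Disjoint J) := fun c c' hcc' =>
    ((hBdisj hcc').mono_left ((hJsub c).trans Set.inter_subset_right)).mono_right
      ((hJsub c').trans Set.inter_subset_right)
  have hJle : ∀ c, (J c).ncard ≤ 3 := fun c => (hJcard c) ▸ min_le_right _ _
  obtain ⟨g, hginj, hgcover, hgrows, hgcols⟩ :=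
    hC3 α n (M ↾ U) Bc3 J hNbase hNcard hNdisj hNU hJindep hJdisj hJle
  set C : Fin 3 → Set α := fun j => {x | ∃ i, g i j = x} with hC
  have hgU : ∀ i j, g i j ∈ U := by
    intro i j
    have h := (hgcols j).subset_ground
    rw [Matroid.restrict_ground_eq] at h
    exact h ⟨i, rfl⟩
  have hCsubU : ∀ j, C j ⊆ U := by
    rintro j x ⟨i, rfl⟩; exact hgU i j
  have hCncard : ∀ j, (C j).ncard = n := by
    intro j
    have hinj : Function.Injective (fun i => g i j) := by
      intro i i' h
      have h2 : ((i, j) : Fin n × Fin 3) = (i', j) := hginj h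
      exact congrArg Prod.fst h2
    have himg : C j = (fun i => g i j) '' Set.univ := by
      rw [Set.image_univ]; rfl
    rw [himg, Set.ncard_image_of_injective _ hinj, Set.ncard_univ,
      Nat.card_eq_fintype_card, Fintype.card_fin]
  have hCMbase : ∀ j, M.IsBase (C j) := by
    intro j
    have hindep : M.Indep (C j) := (Matroid.restrict_indep_iff.mp (hgcols j).indep).1
    obtain ⟨X, hX, hCX⟩ := hindep.exists_isBase_superset
    have hXfin : X.Finite := hEfin.subset hX.subset_ground
    have heq : C j = X :=
      Set.eq_of_subset_of_ncard_le hCX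
        (by rw [hbase_ncard X hX, hCncard j]) hXfin
    rw [heq]; exact hX
  have hCdisj : ∀ j j', j ≠ j' → Disjoint (C j) (C j') := by
    intro j j' hjj'
    rw [Set.disjoint_left]
    rintro x ⟨i, rfl⟩ ⟨i', hi'⟩
    have h2 : ((i', j') : Fin n × Fin 3) = (i, j) := hginj hi'
    exact hjj' (congrArg Prod.snd h2).symm
  have hCcover : ∀ x ∈ U, ∃ j, x ∈ C j := by
    intro x hx
    obtain ⟨i, j, rfl⟩ := hgcover x (by rw [Matroid.restrict_ground_eq]; exact hx)
    exact ⟨j, i, rfl⟩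
  -- the new base partition
  set β' : Fin n → Set α := fun a =>
    if a = a₀ then C 0 else if a = b₀ then C 1 else if a = a₂ then C 2 else β a with hβ'
  have hβ'a₀ : β' a₀ = C 0 := by simp [hβ']
  have hβ'b₀ : β' b₀ = C 1 := by simp [hβ', hb₀ne]
  have hβ'a₂ : β' a₂ = C 2 := by simp [hβ', ha₂0, ha₂b]
  have hβ'other : ∀ a, a ≠ a₀ → a ≠ b₀ → a ≠ a₂ → β' a = β a := by
    intro a h1 h2 h3; simp [hβ', h1, h2, h3]
  have htrio : ∀ a : Fin n, a = a₀ ∨ a = b₀ ∨ a = a₂ ∨ (a ≠ a₀ ∧ a ≠ b₀ ∧ a ≠ a₂) := by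
    intro a; tauto
  have hβoutU : ∀ a, a ≠ a₀ → a ≠ b₀ → a ≠ a₂ → Disjoint (β a) U := by
    intro a h1 h2 h3
    exact Set.disjoint_union_right.mpr
      ⟨Set.disjoint_union_right.mpr ⟨hβdisj h1, hβdisj h2⟩, hβdisj h3⟩
  have hβ'base : ∀ a, M.IsBase (β' a) := by
    intro a
    rcases htrio a with rfl | rfl | rfl | ⟨h1, h2, h3⟩
    · rw [hβ'a₀]; exact hCMbase 0
    · rw [hβ'b₀]; exact hCMbase 1
    · rw [hβ'a₂]; exact hCMbase 2
    · rw [hβ'other a h1 h2 h3]; exact hβbase a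
  have hβ'disj : Pairwise (Function.onFun Disjoint β') := by
    intro a b hab
    show Disjoint (β' a) (β' b)
    rcases htrio a with rfl | rfl | rfl | ⟨ha1, ha2, ha3⟩ <;>
      rcases htrio b with rfl | rfl | rfl | ⟨hb1, hb2, hb3⟩
    · exact absurd rfl hab
    · rw [hβ'a₀, hβ'b₀]; exact hCdisj 0 1 (by decide)
    · rw [hβ'a₀, hβ'a₂]; exact hCdisj 0 2 (by decide)
    · rw [hβ'a₀, hβ'other b hb1 hb2 hb3]
      exact ((hβoutU b hb1 hb2 hb3).symm.mono_left (hCsubU 0))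
    · rw [hβ'b₀, hβ'a₀]; exact hCdisj 1 0 (by decide)
    · exact absurd rfl hab
    · rw [hβ'b₀, hβ'a₂]; exact hCdisj 1 2 (by decide)
    · rw [hβ'b₀, hβ'other b hb1 hb2 hb3]
      exact ((hβoutU b hb1 hb2 hb3).symm.mono_left (hCsubU 1))
    · rw [hβ'a₂, hβ'a₀]; exact hCdisj 2 0 (by decide)
    · rw [hβ'a₂, hβ'b₀]; exact hCdisj 2 1 (by decide)
    · exact absurd rfl hab
    · rw [hβ'a₂, hβ'other b hb1 hb2 hb3]
      exact ((hβoutU b hb1 hb2 hb3).symm.mono_left (hCsubU 2))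
    · rw [hβ'other a ha1 ha2 ha3, hβ'a₀]
      exact ((hβoutU a ha1 ha2 ha3).mono_right (hCsubU 0))
    · rw [hβ'other a ha1 ha2 ha3, hβ'b₀]
      exact ((hβoutU a ha1 ha2 ha3).mono_right (hCsubU 1))
    · rw [hβ'other a ha1 ha2 ha3, hβ'a₂]
      exact ((hβoutU a ha1 ha2 ha3).mono_right (hCsubU 2))
    · rw [hβ'other a ha1 ha2 ha3, hβ'other b hb1 hb2 hb3]
      exact hβdisj hab
  have hβ'U : (⋃ a, β' a) = M.E := by
    apply Set.Subset.antisymm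
    · apply Set.iUnion_subset
      intro a
      rcases htrio a with rfl | rfl | rfl | ⟨h1, h2, h3⟩
      · rw [hβ'a₀]; exact (hCsubU 0).trans hUE
      · rw [hβ'b₀]; exact (hCsubU 1).trans hUE
      · rw [hβ'a₂]; exact (hCsubU 2).trans hUE
      · rw [hβ'other a h1 h2 h3]; exact hβE a
    · intro x hx
      rw [← hβU] at hx
      obtain ⟨s, ⟨a, rfl⟩, hxa⟩ := hx
      by_cases hatrio : a = a₀ ∨ a = b₀ ∨ a = a₂
      · have hxU : x ∈ U := by
          rcases hatrio with rfl | rfl | rfl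
          · exact hβa₀U hxa
          · exact hβb₀U hxa
          · exact hβa₂U hxa
        obtain ⟨j, hj⟩ := hCcover x hxU
        fin_cases j
        · exact Set.mem_iUnion.mpr ⟨a₀, by rw [hβ'a₀]; exact hj⟩
        · exact Set.mem_iUnion.mpr ⟨b₀, by rw [hβ'b₀]; exact hj⟩
        · exact Set.mem_iUnion.mpr ⟨a₂, by rw [hβ'a₂]; exact hj⟩
      · push_neg at hatrio
        exact Set.mem_iUnion.mpr
          ⟨a, by rw [hβ'other a hatrio.1 hatrio.2.1 hatrio.2.2]; exact hxa⟩
  -- counting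
  set T : Set (Fin n) := {a₀, b₀, a₂} with hT
  have hTmem : ∀ a : Fin n, a ∈ T ↔ (a = a₀ ∨ a = b₀ ∨ a = a₂) := by
    intro a; simp [hT]
  have hsplit : ∀ (γ : Fin n → Set α) (c : Fin n),
      {a | (γ a ∩ B c).Nonempty}.ncard
        = ({a | (γ a ∩ B c).Nonempty} ∩ T).ncard
          + ({a | (γ a ∩ B c).Nonempty} \ T).ncard := by
    intro γ c
    rw [← Set.ncard_union_eq (Set.disjoint_sdiff_right.mono_left Set.inter_subset_right),
      Set.inter_union_diff]
  have hoff : ∀ c, {a | (β' a ∩ B c).Nonempty} \ T = {a | (β a ∩ B c).Nonempty} \ T := by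
    intro c
    ext a
    simp only [Set.mem_diff, Set.mem_setOf_eq, hTmem]
    constructor
    · rintro ⟨hne, hnot⟩
      push_neg at hnot
      rw [hβ'other a hnot.1 hnot.2.1 hnot.2.2] at hne
      refine ⟨hne, ?_⟩
      push_neg
      exact hnot
    · rintro ⟨hne, hnot⟩
      push_neg at hnot
      rw [← hβ'other a hnot.1 hnot.2.1 hnot.2.2] at hne
      refine ⟨hne, ?_⟩
      push_neg
      exact hnot
  have hαne : Nonempty α := by
    have : (B c₀).Nonempty := Set.nonempty_of_ncard_ne_zero (by rw [hBcard c₀]; omega)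
    exact ⟨this.choose⟩
  have hβsubU : ∀ a, a ∈ T → β a ⊆ U := by
    intro a ha
    rcases (hTmem a).mp ha with rfl | rfl | rfl
    · exact hβa₀U
    · exact hβb₀U
    · exact hβa₂U
  have holdT : ∀ c, ({a | (β a ∩ B c).Nonempty} ∩ T).ncard ≤ min (k c) 3 := by
    intro c
    refine le_min ?_ ?_
    · have hfex : ∀ a, ∃ x, (β a ∩ B c).Nonempty → x ∈ β a ∩ B c := by
        intro a
        by_cases h : (β a ∩ B c).Nonempty
        · exact ⟨h.choose, fun _ => h.choose_spec⟩
        · exact ⟨hαne.some, fun hc => absurd hc h⟩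
      choose f hfspec using hfex
      have hmaps : ∀ a ∈ {a | (β a ∩ B c).Nonempty} ∩ T, f a ∈ U ∩ B c := by
        rintro a ⟨hne, haT⟩
        have hmem : f a ∈ β a ∩ B c := hfspec a hne
        exact ⟨hβsubU a haT hmem.1, hmem.2⟩
      have hinj : Set.InjOn f ({a | (β a ∩ B c).Nonempty} ∩ T) := by
        rintro a ⟨hna, _⟩ a' ⟨hna', _⟩ heq
        by_contra hne
        exact (hβdisj hne).ne_of_mem (hfspec a hna).1 (hfspec a' hna').1 heq
      calc ({a | (β a ∩ B c).Nonempty} ∩ T).ncard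
          = (f '' ({a | (β a ∩ B c).Nonempty} ∩ T)).ncard :=
            (Set.ncard_image_of_injOn hinj).symm
        _ ≤ (U ∩ B c).ncard :=
            Set.ncard_le_ncard (Set.image_subset_iff.mpr hmaps)
              (hUfin.subset Set.inter_subset_left)
    · calc ({a | (β a ∩ B c).Nonempty} ∩ T).ncard
          ≤ T.ncard := Set.ncard_le_ncard Set.inter_subset_right
        _ ≤ 3 := by
            refine (Set.ncard_insert_le _ _).trans ?_
            have := (Set.ncard_insert_le b₀ ({a₂} : Set (Fin n)))
            simp only [Set.ncard_singleton] at this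
            omega
  have hidxmem : ∀ j : Fin 3, (![a₀, b₀, a₂]) j ∈ T := by
    intro j; fin_cases j
    · exact (hTmem a₀).mpr (Or.inl rfl)
    · exact (hTmem b₀).mpr (Or.inr (Or.inl rfl))
    · exact (hTmem a₂).mpr (Or.inr (Or.inr rfl))
  have hidxβ' : ∀ j : Fin 3, β' ((![a₀, b₀, a₂]) j) = C j := by
    intro j; fin_cases j
    · exact hβ'a₀
    · exact hβ'b₀
    · exact hβ'a₂
  have hidxinj : Function.Injective (![a₀, b₀, a₂] : Fin 3 → Fin n) := by
    intro u v huv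
    fin_cases u <;> fin_cases v <;>
      first
        | rfl
        | exact absurd huv hb₀ne
        | exact absurd huv.symm hb₀ne
        | exact absurd huv ha₂0
        | exact absurd huv.symm ha₂0
        | exact absurd huv ha₂b
        | exact absurd huv.symm ha₂b
  have hnewT : ∀ c, min (k c) 3 ≤ ({a | (β' a ∩ B c).Nonempty} ∩ T).ncard := by
    intro c
    set m : α → Fin n := fun x =>
      if h : ∃ j : Fin 3, g c j = x then (![a₀, b₀, a₂]) h.choose else a₀ with hm
    have hcol : ∀ x ∈ J c, ∃ j : Fin 3, g c j = x := fun x hx => hgrows c hx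
    have hmmem : ∀ x ∈ J c, m x ∈ {a | (β' a ∩ B c).Nonempty} ∩ T := by
      intro x hx
      have hex := hcol x hx
      have hspec : g c hex.choose = x := hex.choose_spec
      refine ⟨?_, by simp only [hm, dif_pos hex]; exact hidxmem _⟩
      simp only [hm, dif_pos hex, Set.mem_setOf_eq]
      rw [hidxβ' hex.choose]
      exact ⟨x, ⟨c, hspec⟩, (hJsub c hx).2⟩
    have hminj : Set.InjOn m (J c) := by
      intro x hx y hy heq
      have hex := hcol x hx
      have hey := hcol y hy
      simp only [hm, dif_pos hex, dif_pos hey] at heq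
      have hje : hex.choose = hey.choose := hidxinj heq
      rw [← hex.choose_spec, ← hey.choose_spec, hje]
    calc min (k c) 3 = (J c).ncard := (hJcard c).symm
      _ = (m '' J c).ncard := (Set.ncard_image_of_injOn hminj).symm
      _ ≤ ({a | (β' a ∩ B c).Nonempty} ∩ T).ncard :=
          Set.ncard_le_ncard (Set.image_subset_iff.mpr hmmem)
  -- strict inequality at c₀
  have hstrict : ({a | (β a ∩ B c₀).Nonempty} ∩ T).ncard < min (k c₀) 3 := by
    have hfb : (β b₀ ∩ B c₀).Finite :=
      hEfin.subset (Set.inter_subset_left.trans (hβE b₀))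
    have hfa : (β a₂ ∩ B c₀).Finite :=
      hEfin.subset (Set.inter_subset_left.trans (hβE a₂))
    have hkge : (β b₀ ∩ B c₀).ncard + (β a₂ ∩ B c₀).ncard ≤ k c₀ := by
      rw [← Set.ncard_union_eq
        (((hβdisj ha₂b.symm).mono_left Set.inter_subset_left).mono_right
          Set.inter_subset_left) hfb hfa]
      refine Set.ncard_le_ncard ?_ (hUfin.subset Set.inter_subset_left)
      refine Set.union_subset ?_ ?_
      · exact fun x hx => ⟨hβb₀U hx.1, hx.2⟩
      · exact fun x hx => ⟨hβa₂U hx.1, hx.2⟩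
    by_cases h2 : (β a₂ ∩ B c₀).Nonempty
    · have hSeq : {a | (β a ∩ B c₀).Nonempty} ∩ T = {b₀, a₂} := by
        ext a
        simp only [Set.mem_inter_iff, Set.mem_setOf_eq, hTmem, Set.mem_insert_iff,
          Set.mem_singleton_iff]
        constructor
        · rintro ⟨hne, rfl | rfl | rfl⟩
          · rw [ha₀] at hne; exact absurd hne (by simp [Set.not_nonempty_empty])
          · exact Or.inl rfl
          · exact Or.inr rfl
        · rintro (rfl | rfl)
          · exact ⟨Set.nonempty_of_ncard_ne_zero (by omega), Or.inr (Or.inl rfl)⟩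
          · exact ⟨h2, Or.inr (Or.inr rfl)⟩
      rw [hSeq, Set.ncard_pair ha₂b.symm]
      have h3 : 1 ≤ (β a₂ ∩ B c₀).ncard := (Set.ncard_pos hfa).mpr h2
      omega
    · have hSeq : {a | (β a ∩ B c₀).Nonempty} ∩ T = {b₀} := by
        ext a
        simp only [Set.mem_inter_iff, Set.mem_setOf_eq, hTmem, Set.mem_singleton_iff]
        constructor
        · rintro ⟨hne, rfl | rfl | rfl⟩
          · rw [ha₀] at hne; exact absurd hne (by simp [Set.not_nonempty_empty])
          · rfl
          · exact absurd hne h2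
        · rintro rfl
          exact ⟨Set.nonempty_of_ncard_ne_zero (by omega), Or.inr (Or.inl rfl)⟩
      rw [hSeq, Set.ncard_singleton]
      have h4 : (β a₂ ∩ B c₀).ncard = 0 := by
        rw [Set.not_nonempty_iff_eq_empty.mp h2]; simp
      omega
  refine ⟨β', ⟨hβ'base, hβ'disj, hβ'U⟩, ?_⟩
  rw [PhiFun, PhiFun]
  refine Finset.sum_lt_sum (fun c _ => ?_) ⟨c₀, Finset.mem_univ c₀, ?_⟩
  · rw [hsplit β c, hsplit β' c, hoff c]
    exact Nat.add_le_add_right ((holdT c).trans (hnewT c)) _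
  · rw [hsplit β c₀, hsplit β' c₀, hoff c₀]
    exact Nat.add_lt_add_right (lt_of_lt_of_le hstrict (hnewT c₀)) _


lemma aux_D_le_phi {α : Type} {n : ℕ} (E : Set α) (hE : E.Finite)
    (B : Fin n → Set α) (hBdisj : Pairwise (Function.onFun Disjoint B))
    (hBU : (⋃ c, B c) = E)
    (γ τ : Fin n → Set α) (hγE : ∀ a, γ a ⊆ E)
    (hτ1 : ∀ j i, (τ j ∩ B i).ncard = 1) :
    ∑ a, (γ a ∩ τ a).ncard ≤ ∑ a, {c | (γ a ∩ B c).Nonempty}.ncard := by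
  classical
  refine Finset.sum_le_sum fun a _ => ?_
  have hcover : (⋃ c, γ a ∩ τ a ∩ B c) = γ a ∩ τ a := by
    rw [← Set.inter_iUnion, hBU]
    exact Set.inter_eq_self_of_subset_left ((Set.inter_subset_left).trans (hγE a))
  have hsum : (γ a ∩ τ a).ncard = ∑ c, (γ a ∩ τ a ∩ B c).ncard := by
    conv_lhs => rw [← hcover]
    exact aux_ncard_iUnion _
      (fun c => hE.subset ((Set.inter_subset_left).trans
        ((Set.inter_subset_left).trans (hγE a))))
      (fun c c' hcc' => ((hBdisj hcc').mono_left Set.inter_subset_right).mono_right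
        Set.inter_subset_right)
  rw [hsum, aux_ncard_setOf]
  refine Finset.sum_le_sum fun c _ => ?_
  by_cases h : (γ a ∩ τ a ∩ B c).Nonempty
  · have h1 : (γ a ∩ B c).Nonempty := h.mono fun x hx => ⟨hx.1.1, hx.2⟩
    rw [if_pos h1]
    have hsub : γ a ∩ τ a ∩ B c ⊆ τ a ∩ B c := fun x hx => ⟨hx.1.2, hx.2⟩
    have hfin : (τ a ∩ B c).Finite := by
      by_contra hinf
      have h2 := hτ1 a c
      rw [Set.Infinite.ncard hinf] at h2
      omega
    have h3 := Set.ncard_le_ncard hsub hfin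
    rw [hτ1 a c] at h3
    exact h3
  · rw [Set.not_nonempty_iff_eq_empty.mp h]
    simp


/-- The descent step: assuming `C(3)`, any double partition with `μ > 0` can be
improved to one with strictly smaller `μ`. -/
theorem descent_step (α : Type) (n : ℕ) (hn : 3 ≤ n) (M : Matroid α)
    (B : Fin n → Set α) (hB : IsBasePartition M B) (hBcard : ∀ i, (B i).ncard = n)
    (hC3 : CStatement 3)
    (β τ : Fin n → Set α) (hβ : IsBasePartition M β)
    (hτ : IsTransversalPartition B τ M.E) (hμ : 0 < mu β τ) :
    ∃ β' τ' : Fin n → Set α, IsBasePartition M β' ∧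
      IsTransversalPartition B τ' M.E ∧ mu β' τ' < mu β τ := by
  classical
  have hBfin : ∀ i, (B i).Finite := by
    intro i
    by_contra h
    have h0 := Set.Infinite.ncard h
    rw [hBcard i] at h0
    omega
  have hEfin : M.E.Finite := by
    rw [← hB.2.2]; exact Set.finite_iUnion hBfin
  have hbase_ncard : ∀ X, M.IsBase X → X.ncard = n := fun X hX =>
    (hX.ncard_eq_ncard_of_isBase (hB.1 ⟨0, by omega⟩)).trans (hBcard _)
  have hphiswap : ∀ γ : Fin n → Set α,
      PhiFun B γ = ∑ a, {c | (γ a ∩ B c).Nonempty}.ncard := by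
    intro γ
    rw [PhiFun]
    simp only [aux_ncard_setOf]
    exact Finset.sum_comm
  have hmuβτ : mu β τ + ∑ a, (β a ∩ τ a).ncard = n * n :=
    aux_mu_add M.E hEfin β τ (fun a => (hβ.1 a).subset_ground)
      (fun a => hbase_ncard _ (hβ.1 a)) hτ.2.1 hτ.2.2
  by_cases hcase : ∑ a, (β a ∩ τ a).ncard < PhiFun B β
  · obtain ⟨τ', hτ', hτ'ge⟩ := aux_tstar M.E hEfin B hBcard hB.2.1 hB.2.2 β hβ.2.1
    refine ⟨β, τ', hβ, hτ', ?_⟩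
    have hmu' : mu β τ' + ∑ a, (β a ∩ τ' a).ncard = n * n :=
      aux_mu_add M.E hEfin β τ' (fun a => (hβ.1 a).subset_ground)
        (fun a => hbase_ncard _ (hβ.1 a)) hτ'.2.1 hτ'.2.2
    have hge : PhiFun B β ≤ ∑ a, (β a ∩ τ' a).ncard := by
      rw [hphiswap β]
      exact Finset.sum_le_sum fun a _ => hτ'ge a
    omega
  · push_neg at hcase
    have hDle : ∑ a, (β a ∩ τ a).ncard ≤ PhiFun B β := by
      rw [hphiswap β]
      exact aux_D_le_phi M.E hEfin B hB.2.1 hB.2.2 β τ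
        (fun a => (hβ.1 a).subset_ground) hτ.1
    have hphi_lt : PhiFun B β < n * n := by omega
    obtain ⟨β', hβ'p, hβ'gt⟩ :=
      aux_phi_increase hn M hEfin B hB hBcard hC3 β hβ hphi_lt
    obtain ⟨τ', hτ', hτ'ge⟩ := aux_tstar M.E hEfin B hBcard hB.2.1 hB.2.2 β' hβ'p.2.1
    refine ⟨β', τ', hβ'p, hτ', ?_⟩
    have hmu' : mu β' τ' + ∑ a, (β' a ∩ τ' a).ncard = n * n :=
      aux_mu_add M.E hEfin β' τ' (fun a => (hβ'p.1 a).subset_ground)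
        (fun a => hbase_ncard _ (hβ'p.1 a)) hτ'.2.1 hτ'.2.2
    have hge : PhiFun B β' ≤ ∑ a, (β' a ∩ τ' a).ncard := by
      rw [hphiswap β']
      exact Finset.sum_le_sum fun a _ => hτ'ge a
    omega
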